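/- Let G be a ternary relation symbol, R a binary relation symbol, and A a unary relation symbol. Let φ := ∃x∃y∃z (G(x,y,z) ∧ R(x,y) ∧ R(y,z) ∧ R(z,x)) and ψ := ∀x∀y (R(x,y) → (A(x) ↔ ¬A(y))). Then φ ⊨ ¬ψ (both φ and ¬ψ are one-dimensional GF sentences), but there is no one-dimensional GF sentence χ over the shared vocabulary {R} such that φ ⊨ χ and χ ⊨ ¬ψ. -/

import Mathlib

set_option autoImplicit false

/-! Relational vocabularies: a signature is a type of relation symbols together with
(positive) arities.  A vocabulary is a set of relation symbols of a signature. -/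
structure Sig where
  Rel : Type
  arity : Rel → ℕ
  arity_pos : ∀ R, 0 < arity R

namespace GFP

variable {S : Sig}

/-- Atomic formulas: equalities between variables and relational atoms.
Variables are natural numbers. -/
inductive Atom (S : Sig) : Type where
  | eq : ℕ → ℕ → Atom S
  | rel : (R : S.Rel) → (Fin (S.arity R) → ℕ) → Atom S

def Atom.vars : Atom S → Finset ℕ
  | .eq i j => {i, j}
  | .rel _ ts => Finset.image ts Finset.univ

def Atom.syms : Atom S → Set S.Rel
  | .eq _ _ => ∅
  | .rel R _ => {R}

/-- Syntax of the guarded fragment: atoms, negation, conjunction and guarded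
existential quantification `exg ys α ψ`, standing for `∃ ys (α ∧ ψ)` where `α` is
an atomic guard. -/
inductive GFml (S : Sig) : Type where
  | atom : Atom S → GFml S
  | neg : GFml S → GFml S
  | and : GFml S → GFml S → GFml S
  | exg : List ℕ → Atom S → GFml S → GFml S

namespace GFml

def freeVars : GFml S → Finset ℕ
  | atom a => a.vars
  | neg φ => φ.freeVars
  | and φ ψ => φ.freeVars ∪ ψ.freeVars
  | exg ys a φ => (a.vars ∪ φ.freeVars) \ ys.toFinset

def syms : GFml S → Set S.Rel
  | atom a => a.syms
  | neg φ => φ.syms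
  | and φ ψ => φ.syms ∪ ψ.syms
  | exg _ a φ => a.syms ∪ φ.syms

/-- Well-formedness of guarded quantification: the quantified variables and all free
variables of the body occur in the guard. -/
def WF : GFml S → Prop
  | atom _ => True
  | neg φ => φ.WF
  | and φ ψ => φ.WF ∧ ψ.WF
  | exg ys a φ => φ.WF ∧ φ.freeVars ⊆ a.vars ∧ ys.toFinset ⊆ a.vars

def QFree : GFml S → Prop
  | atom _ => True
  | neg φ => φ.QFree
  | and φ ψ => φ.QFree ∧ ψ.QFree
  | exg _ _ _ => False

/-- One-dimensionality: each guarded quantification block leaves at most one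
variable free. -/
def OneDim : GFml S → Prop
  | atom _ => True
  | neg φ => φ.OneDim
  | and φ ψ => φ.OneDim ∧ ψ.OneDim
  | exg ys a φ => φ.OneDim ∧ (freeVars (exg ys a φ)).card ≤ 1

/-- Subformulas, where a guarded quantification `∃ȳ(α ∧ ψ)` has as subformulas
itself together with the subformulas of `α ∧ ψ`. -/
def subf : GFml S → List (GFml S)
  | atom a => [atom a]
  | neg φ => neg φ :: φ.subf
  | and φ ψ => and φ ψ :: (φ.subf ++ ψ.subf)
  | exg ys a φ => exg ys a φ :: and (atom a) φ :: atom a :: φ.subf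

end GFml

/-- A structure for the signature `S` with domain `D` (interpreting every relation
symbol of `S`). -/
def Str (S : Sig) (D : Type) : Type := (R : S.Rel) → (Fin (S.arity R) → D) → Prop

def Atom.Realize {D : Type} (A : Str S D) (v : ℕ → D) : Atom S → Prop
  | .eq i j => v i = v j
  | .rel R ts => A R fun k => v (ts k)

def GFml.Realize {D : Type} (A : Str S D) (v : ℕ → D) : GFml S → Prop
  | .atom a => a.Realize A v
  | .neg φ => ¬ φ.Realize A v
  | .and φ ψ => φ.Realize A v ∧ ψ.Realize A v
  | .exg ys a φ =>
      ∃ w : ℕ → D, (∀ x, x ∉ ys → w x = v x) ∧ a.Realize A w ∧ φ.Realize A w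

/-- Relative `X`-atoms. -/
def RelAtom (X : Finset ℕ) (ψ : GFml S) : Prop :=
  ψ.freeVars = ∅ ∨
  (∃ x ∈ X, ψ.freeVars = {x}) ∨
  (∃ x ∈ X, ∃ y ∈ X, ψ = .atom (.eq x y)) ∨
  (∃ (R : S.Rel) (ts : Fin (S.arity R) → ℕ), ψ = .atom (.rel R ts) ∧ ψ.freeVars = X) ∨
  (∃ ys a χ, ψ = .exg ys a χ ∧ ψ.freeVars = X)

/-- Boolean combinations of formulas satisfying `P`. -/
inductive BoolComb (P : GFml S → Prop) : GFml S → Prop where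
  | base {φ} : P φ → BoolComb P φ
  | neg {φ} : BoolComb P φ → BoolComb P (.neg φ)
  | and {φ ψ} : BoolComb P φ → BoolComb P ψ → BoolComb P (.and φ ψ)

/-- Uniformity: every subformula is a Boolean combination of relative `X`-atoms,
where `X` is its set of free variables. -/
def GFml.Uniform (φ : GFml S) : Prop :=
  ∀ ψ ∈ φ.subf, BoolComb (RelAtom ψ.freeVars) ψ

/-- Membership in `GF[σ]`. -/
def IsGF (σ : Set S.Rel) (φ : GFml S) : Prop := φ.WF ∧ φ.syms ⊆ σ

/-- Membership in the uniform one-dimensional guarded fragment `GUF1[σ]`. -/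
def IsGUF1 (σ : Set S.Rel) (φ : GFml S) : Prop := IsGF σ φ ∧ φ.OneDim ∧ φ.Uniform

/-- Membership in the uniform guarded fragment `UGF[σ]`. -/
def IsUGF (σ : Set S.Rel) (φ : GFml S) : Prop := IsGF σ φ ∧ φ.Uniform

def GFml.Sentence (φ : GFml S) : Prop := φ.freeVars = ∅

/-- Semantic entailment `φ ⊨ ψ`. -/
def Entails (φ ψ : GFml S) : Prop :=
  ∀ (D : Type) (_ : Nonempty D) (A : Str S D) (v : ℕ → D), φ.Realize A v → ψ.Realize A v

/-- Truth of a sentence in a structure. -/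
def Sat {D : Type} (A : Str S D) (φ : GFml S) : Prop := ∀ v : ℕ → D, φ.Realize A v

def Satisfiable (φ : GFml S) : Prop :=
  ∃ (D : Type) (_ : Nonempty D) (A : Str S D), Sat A φ

/-! ### Uniform partial isomorphisms, live sets and uniform guarded bisimulations -/

/-- `p` (a finite nonempty functional and injective graph) is a uniform partial
`σ`-isomorphism between `A` and `B`: it preserves the table of (an enumeration of)
its domain, i.e. all `σ`-atoms using all elements of the domain or a single one. -/
def IsUPIso (σ : Set S.Rel) {D₁ D₂ : Type} (A : Str S D₁) (B : Str S D₂)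
    (p : Set (D₁ × D₂)) : Prop :=
  p.Finite ∧ p.Nonempty ∧
  (∀ a b b', (a, b) ∈ p → (a, b') ∈ p → b = b') ∧
  (∀ a a' b, (a, b) ∈ p → (a', b) ∈ p → a = a') ∧
  ∀ R ∈ σ, ∀ t : Fin (S.arity R) → D₁ × D₂,
    (∀ j, t j ∈ p) →
    ((∀ x ∈ p, ∃ j, t j = x) ∨ ∀ j j', t j = t j') →
    (A R (fun j => (t j).1) ↔ B R fun j => (t j).2)

/-- `σ`-live subsets of a structure: (nonempty) singletons and sets of elements of
a tuple realizing some relation in `σ`. -/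
def Live (σ : Set S.Rel) {D : Type} (A : Str S D) (X : Set D) : Prop :=
  X.Nonempty ∧
    (X.Subsingleton ∨ ∃ R ∈ σ, ∃ t : Fin (S.arity R) → D, A R t ∧ X = Set.range t)

/-- Uniform guarded `σ`-bisimulation between `A` and `B` (back and forth conditions). -/
def IsBisim (σ : Set S.Rel) {D₁ D₂ : Type} (A : Str S D₁) (B : Str S D₂)
    (Z : Set (Set (D₁ × D₂))) : Prop :=
  Z.Nonempty ∧ (∀ p ∈ Z, IsUPIso σ A B p) ∧
  (∀ p ∈ Z, ∀ a b, (a, b) ∈ p → ∀ X' : Set D₁, Live σ A X' → a ∈ X' →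
    ∃ q ∈ Z, {x | ∃ y, (x, y) ∈ q} = X' ∧ (a, b) ∈ q) ∧
  (∀ p ∈ Z, ∀ a b, (a, b) ∈ p → ∀ Y' : Set D₂, Live σ B Y' → b ∈ Y' →
    ∃ q ∈ Z, {y | ∃ x, (x, y) ∈ q} = Y' ∧ (a, b) ∈ q)

/-- Uniform guarded `σ`-bisimulation between `(A, c̄)` and `(B, d̄)`: additionally
the cover condition, i.e. some `h ∈ Z` has domain exactly `c̄` and maps `c̄` to `d̄`. -/
def IsBisimPair (σ : Set S.Rel) {D₁ D₂ : Type} (A : Str S D₁) (B : Str S D₂)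
    {n : ℕ} (c : Fin n → D₁) (d : Fin n → D₂) (Z : Set (Set (D₁ × D₂))) : Prop :=
  IsBisim σ A B Z ∧
    ∃ h ∈ Z, (∀ i, (c i, d i) ∈ h) ∧ ∀ x y, (x, y) ∈ h → ∃ i, x = c i

/-- The convention `φ(x₁,…,xₙ)`: the set of free variables of `φ` is exactly
`{x₁,…,xₙ}`, or `φ` has at most one free variable belonging to `{x₁,…,xₙ}`, or `φ`
is an equality between two of the variables `x₁,…,xₙ`.  (Variables `x₁,…,xₙ` are
represented by `0,…,n-1`.) -/
def FVConv (n : ℕ) (φ : GFml S) : Prop :=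
  φ.freeVars = Finset.range n ∨ (∃ i < n, φ.freeVars ⊆ {i}) ∨
    ∃ i < n, ∃ j < n, φ = .atom (.eq i j)

/-- `(A, c̄) ≡σ (B, d̄)`: the two pointed structures agree on all `GUF1[σ]` formulas
`φ(x₁,…,xₙ)`. -/
def GUF1EquivAt (σ : Set S.Rel) {D₁ D₂ : Type} (A : Str S D₁) (B : Str S D₂)
    {n : ℕ} (c : Fin n → D₁) (d : Fin n → D₂) : Prop :=
  ∀ φ : GFml S, IsGUF1 σ φ → FVConv n φ →
    ∀ (v : ℕ → D₁) (w : ℕ → D₂),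
      (∀ i : Fin n, v i.1 = c i) → (∀ i : Fin n, w i.1 = d i) →
      (φ.Realize A v ↔ φ.Realize B w)

/-! ### Full first-order logic and ω-saturation -/

inductive FO (S : Sig) : Type where
  | atom : Atom S → FO S
  | neg : FO S → FO S
  | and : FO S → FO S → FO S
  | ex : ℕ → FO S → FO S

def FO.freeVars : FO S → Finset ℕ
  | .atom a => a.vars
  | .neg φ => φ.freeVars
  | .and φ ψ => φ.freeVars ∪ ψ.freeVars
  | .ex x φ => φ.freeVars.erase x

def FO.syms : FO S → Set S.Rel
  | .atom a => a.syms
  | .neg φ => φ.syms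
  | .and φ ψ => φ.syms ∪ ψ.syms
  | .ex _ φ => φ.syms

def FO.Realize {D : Type} (A : Str S D) (v : ℕ → D) : FO S → Prop
  | .atom a => a.Realize A v
  | .neg φ => ¬ φ.Realize A v
  | .and φ ψ => φ.Realize A v ∧ ψ.Realize A v
  | .ex x φ => ∃ e : D, φ.Realize A (Function.update v x e)

/-- `A` is ω-saturated: every elementary type with finitely many parameters
`a : Fin n → D` (occupying the variables `m, …, m + n - 1`) and free variables among
`0, …, m - 1` which is finitely realized in `(A, a)` is realized in `(A, a)`. -/
def OmegaSaturated {D : Type} (A : Str S D) : Prop :=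
  ∀ (n m : ℕ) (a : Fin n → D) (T : Set (FO S)),
    (∀ φ ∈ T, φ.freeVars ⊆ Finset.range (m + n)) →
    (∀ T₀ : Finset (FO S), ↑T₀ ⊆ T →
      ∃ v : ℕ → D, (∀ i : Fin n, v (m + i.1) = a i) ∧ ∀ φ ∈ T₀, φ.Realize A v) →
    ∃ v : ℕ → D, (∀ i : Fin n, v (m + i.1) = a i) ∧ ∀ φ ∈ T, φ.Realize A v

/-! ### The amalgam construction -/

/-- `(a, b) ∈ Z`: some member of `Z` has domain `{a}` and maps `a` to `b`. -/
def PairInZ {D₁ D₂ : Type} (Z : Set (Set (D₁ × D₂))) (x : D₁ × D₂) : Prop :=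
  ∃ p ∈ Z, x ∈ p ∧ ∀ y ∈ p, y.1 = x.1

/-- `(ā, b̄) ∈ Z`: some member of `Z` has domain exactly `{a₁,…,aₖ}` and maps each
`aⱼ` to `bⱼ`. -/
def TupInZ {D₁ D₂ : Type} (Z : Set (Set (D₁ × D₂))) {k : ℕ} (t : Fin k → D₁ × D₂) : Prop :=
  ∃ p ∈ Z, (∀ j, t j ∈ p) ∧ ∀ y ∈ p, ∃ j, y.1 = (t j).1

def LeftGood {D₁ D₂ : Type} {k : ℕ} (t : Fin k → D₁ × D₂) : Prop :=
  ∀ i j, (t i).1 = (t j).1 → (t i).2 = (t j).2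

def RightGood {D₁ D₂ : Type} {k : ℕ} (t : Fin k → D₁ × D₂) : Prop :=
  ∀ i j, (t i).2 = (t j).2 → (t i).1 = (t j).1

/-- The domain of the amalgam: pairs `(a,b)` with `(a,b) ∈ Z`. -/
def AmDom {D₁ D₂ : Type} (Z : Set (Set (D₁ × D₂))) : Type := {x : D₁ × D₂ // PairInZ Z x}

/-- The amalgam structure built from a uniform guarded `(σ ∩ τ)`-bisimulation `Z`
between `A` and `B`. -/
def Amalgam (σ τ : Set S.Rel) {D₁ D₂ : Type} (A : Str S D₁) (B : Str S D₂)
    (Z : Set (Set (D₁ × D₂))) : Str S (AmDom Z) := fun R t =>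
  (R ∈ σ ∩ τ ∧ A R (fun j => (t j).1.1) ∧ TupInZ Z fun j => (t j).1) ∨
  (R ∈ σ \ τ ∧ A R (fun j => (t j).1.1) ∧
    (TupInZ Z (fun j => (t j).1) ∨
      (LeftGood (fun j => (t j).1) ∧
        ¬ Live (σ ∩ τ) A (Set.range fun j => (t j).1.1)))) ∨
  (R ∈ τ \ σ ∧ B R (fun j => (t j).1.2) ∧
    (TupInZ Z (fun j => (t j).1) ∨
      (RightGood (fun j => (t j).1) ∧
        ¬ Live (σ ∩ τ) B (Set.range fun j => (t j).1.2))))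

/-- `Z₁`: the projections `(ā ⊗ b̄) ↦ ā` for `σ`-live `(ā ⊗ b̄)` in the amalgam. -/
def Z1 (σ τ : Set S.Rel) {D₁ D₂ : Type} (A : Str S D₁) (B : Str S D₂)
    (Z : Set (Set (D₁ × D₂))) : Set (Set (AmDom Z × D₁)) :=
  {p | ∃ X : Set (AmDom Z), Live σ (Amalgam σ τ A B Z) X ∧
        p = (fun u : AmDom Z => (u, u.1.1)) '' X}

/-- `Z₂`: the projections `(ā ⊗ b̄) ↦ b̄` for `τ`-live `(ā ⊗ b̄)` in the amalgam. -/
def Z2 (σ τ : Set S.Rel) {D₁ D₂ : Type} (A : Str S D₁) (B : Str S D₂)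
    (Z : Set (Set (D₁ × D₂))) : Set (Set (AmDom Z × D₂)) :=
  {p | ∃ X : Set (AmDom Z), Live τ (Amalgam σ τ A B Z) X ∧
        p = (fun u : AmDom Z => (u, u.1.2)) '' X}

/-! ### Normal form for the uniform guarded fragment -/

def bigAnd : List (GFml S) → GFml S
  | [] => .atom (.eq 0 0)
  | [c] => c
  | c :: c' :: rest => .and c (bigAnd (c' :: rest))

/-- A conjunct `∃z λ(z)` (with atomic `λ` whose variable set is `{z}`),
rendered as `∃z (λ(z) ∧ λ(z))`. -/
def IsExConj (c : GFml S) : Prop :=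
  ∃ (z : ℕ) (a : Atom S), a.vars = {z} ∧ c = .exg [z] a (.atom a)

/-- An existential requirement `∀x̄(α(x̄) → ∃ȳ(β(x̄,ȳ) ∧ ψ(x̄,ȳ)))`, rendered as
`¬∃x̄(α ∧ ¬∃ȳ(β ∧ ψ))`. -/
def IsExReq (c : GFml S) : Prop :=
  ∃ (xs : List ℕ) (α : Atom S) (ys : List ℕ) (β : Atom S) (ψ : GFml S),
    xs ≠ [] ∧ ψ.QFree ∧ c = .neg (.exg xs α (.neg (.exg ys β ψ)))

/-- A universal requirement `∀x̄(κ(x̄) → (θ(x̄) → ∀ȳ(γ(x̄,ȳ) → ψ(x̄,ȳ))))`, rendered as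
`¬∃x̄(κ ∧ (θ ∧ ∃ȳ(γ ∧ ¬ψ)))`. -/
def IsUnivReq (c : GFml S) : Prop :=
  ∃ (xs : List ℕ) (κ : Atom S) (θ : GFml S) (ys : List ℕ) (γ : Atom S) (ψ : GFml S),
    xs ≠ [] ∧ θ.QFree ∧ ψ.QFree ∧
      c = .neg (.exg xs κ (.and θ (.exg ys γ (.neg ψ))))

/-- `φ` is in normal form, with list of conjuncts `L`. -/
def NormalFormWith (φ : GFml S) (L : List (GFml S)) : Prop :=
  φ = bigAnd L ∧ (∃ c ∈ L, IsExConj c) ∧ (∃ c ∈ L, IsExReq c) ∧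
    (∃ c ∈ L, IsUnivReq c) ∧ ∀ c ∈ L, IsExConj c ∨ IsExReq c ∨ IsUnivReq c

def InNormalForm (φ : GFml S) : Prop := ∃ L : List (GFml S), NormalFormWith φ L

/-- Expansions/reducts: `A` and `A'` agree on the symbols in `ρ`. -/
def AgreeOn (ρ : Set S.Rel) {D : Type} (A A' : Str S D) : Prop := ∀ R ∈ ρ, A R = A' R

/-! ### 1-types and satisfiability witnesses -/

/-- A 1-type over the signature: for each relation symbol, whether the (unique)
`{x}`-atom of that symbol is in the type. -/
def OneType (S : Sig) : Type := S.Rel → Prop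

/-- The 1-type realized by an element. -/
def tp {D : Type} (A : Str S D) (a : D) : OneType S := fun R => A R fun _ => a

/-- A 1-type contains the atomic formula `a(x)` (for `a` with a single variable). -/
def OneType.SatAtom (π : OneType S) : Atom S → Prop
  | .eq _ _ => True
  | .rel R _ => π R

/-- `(A, c)` is a `(P, π)`-witness for a normal-form sentence with conjuncts `L`. -/
def IsPWitness (L : List (GFml S)) {D : Type} (A : Str S D) (c : D)
    (P : Set (OneType S)) (π : OneType S) : Prop :=
  tp A c = π ∧
  (∀ a : D, tp A a ∈ P) ∧
  (∀ cj ∈ L, ∀ (xs : List ℕ) (α : Atom S) (ys : List ℕ) (β : Atom S) (ψ : GFml S),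
    cj = GFml.neg (.exg xs α (.neg (.exg ys β ψ))) →
    ∀ v : ℕ → D, (∃ x ∈ xs, v x = c) → α.Realize A v →
      ∃ w : ℕ → D, (∀ z, z ∉ ys → w z = v z) ∧ β.Realize A w ∧ ψ.Realize A w) ∧
  (∀ cj ∈ L, ∀ (xs : List ℕ) (κ : Atom S) (θ : GFml S) (ys : List ℕ) (γ : Atom S)
      (ψ : GFml S),
    cj = GFml.neg (.exg xs κ (.and θ (.exg ys γ (.neg ψ)))) →
    ∀ v : ℕ → D, (∃ x ∈ xs, v x = c) → κ.Realize A v → θ.Realize A v →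
      ∀ w : ℕ → D, (∀ z, z ∉ ys → w z = v z) → γ.Realize A w → ψ.Realize A w)

/-- `P` is a witness for a normal-form sentence with conjuncts `L`. -/
def IsWitnessSet (L : List (GFml S)) (P : Set (OneType S)) : Prop :=
  (∀ cj ∈ L, ∀ (z : ℕ) (a : Atom S), cj = GFml.exg [z] a (.atom a) →
    ∃ π ∈ P, π.SatAtom a) ∧
  (∀ π ∈ P, ∃ (D : Type) (_ : Nonempty D) (A : Str S D) (c : D), IsPWitness L A c P π)

end GFP
namespace GFP

/-- The concrete signature with a ternary `G`, a binary `R` and a unary `A`. -/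
inductive GRA : Type where
  | G | R | A

def SigGRA : Sig where
  Rel := GRA
  arity := fun r => match r with | .G => 3 | .R => 2 | .A => 1
  -- (the linter warning about `R` is irrelevant)
  arity_pos := by intro r; cases r <;> decide

/-- `G(x,y,z)` -/
def atG : Atom SigGRA := .rel GRA.G ![0, 1, 2]
/-- `R(x,y)`, `R(y,z)`, `R(z,x)` -/
def atRxy : Atom SigGRA := .rel GRA.R ![0, 1]
def atRyz : Atom SigGRA := .rel GRA.R ![1, 2]
def atRzx : Atom SigGRA := .rel GRA.R ![2, 0]
/-- `A(x)`, `A(y)` -/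
def atAx : Atom SigGRA := .rel GRA.A ![0]
def atAy : Atom SigGRA := .rel GRA.A ![1]

/-- `φ := ∃x∃y∃z (G(x,y,z) ∧ R(x,y) ∧ R(y,z) ∧ R(z,x))`. -/
def phiTriangle : GFml SigGRA :=
  .exg [0, 1, 2] atG (.and (.atom atRxy) (.and (.atom atRyz) (.atom atRzx)))

/-- `A(x) ↔ ¬A(y)`, written as `¬(¬(A(x) ∧ ¬A(y)) ∧ ¬(¬A(x) ∧ A(y)))`. -/
def iffAxAy : GFml SigGRA :=
  .neg (.and (.neg (.and (.atom atAx) (.neg (.atom atAy))))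
             (.neg (.and (.neg (.atom atAx)) (.atom atAy))))

/-- `ψ := ∀x∀y (R(x,y) → (A(x) ↔ ¬A(y)))`, written as `¬∃x∃y(R(x,y) ∧ ¬(A(x) ↔ ¬A(y)))`. -/
def psiTwoCol : GFml SigGRA := .neg (.exg [0, 1] atRxy (.neg iffAxAy))

end GFP


namespace GFP

def M1 : Str SigGRA (ZMod 3) := fun r => match r with
  | GRA.G => fun _ => True
  | GRA.R => fun t : Fin 2 → ZMod 3 => t 1 = t 0 + 1
  | GRA.A => fun _ => False

def M2 : Str SigGRA ℤ := fun r => match r with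
  | GRA.G => fun _ => False
  | GRA.R => fun t : Fin 2 → ℤ => t 1 = t 0 + 1
  | GRA.A => fun t : Fin 1 → ℤ => Even (t 0)

def Good (v : ℕ → ZMod 3) (w : ℕ → ℤ) (X : Finset ℕ) : Prop :=
  (∀ x ∈ X, ((w x : ZMod 3) = v x)) ∧ ∀ x ∈ X, ∀ y ∈ X, |w x - w y| ≤ 1

def atR (ts : Fin 2 → ℕ) : Atom SigGRA := Atom.rel GRA.R ts
def atE (i j : ℕ) : Atom SigGRA := Atom.eq i j
def atGG (ts : Fin 3 → ℕ) : Atom SigGRA := Atom.rel GRA.G ts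
def atAA (ts : Fin 1 → ℕ) : Atom SigGRA := Atom.rel GRA.A ts

lemma int_eq_of_cast {a b : ℤ} (h : (a : ZMod 3) = b) (h2 : |a - b| ≤ 1) : a = b := by
  have h3 := ((ZMod.intCast_eq_intCast_iff a b 3).mp h).dvd
  rw [abs_le] at h2
  omega

lemma int_succ_of_cast {a b : ℤ} (h : (b : ZMod 3) = (a : ZMod 3) + 1)
    (h2 : |a - b| ≤ 1) : b = a + 1 := by
  have h' : ((a + 1 : ℤ) : ZMod 3) = (b : ZMod 3) := by push_cast; rw [h]
  have h3 := ((ZMod.intCast_eq_intCast_iff _ _ 3).mp h').dvd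
  rw [abs_le] at h2
  omega

lemma lift_cast (c : ZMod 3) : (((c.val : ℤ) : ZMod 3)) = c := by
  push_cast
  rw [ZMod.natCast_val, ZMod.cast_id]

lemma mem_varsR (ts : Fin 2 → ℕ) (x : ℕ) (hx : x ∈ (atR ts).vars) :
    x = ts 0 ∨ x = ts 1 := by
  have hx : x ∈ Finset.image ts Finset.univ := hx
  obtain ⟨k, -, rfl⟩ := Finset.mem_image.mp hx
  fin_cases k
  · exact Or.inl rfl
  · exact Or.inr rfl

lemma mem_varsR0 (ts : Fin 2 → ℕ) : ts 0 ∈ (atR ts).vars :=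
  Finset.mem_image_of_mem ts (Finset.mem_univ 0)

lemma mem_varsR1 (ts : Fin 2 → ℕ) : ts 1 ∈ (atR ts).vars :=
  Finset.mem_image_of_mem ts (Finset.mem_univ 1)

lemma notG (ts : Fin 3 → ℕ) (h : (atGG ts).syms ⊆ {GRA.R}) : False := by
  have := h (show GRA.G ∈ (atGG ts).syms from rfl)
  replace this : GRA.G = GRA.R := this
  exact GRA.noConfusion this

lemma notA (ts : Fin 1 → ℕ) (h : (atAA ts).syms ⊆ {GRA.R}) : False := by
  have := h (show GRA.A ∈ (atAA ts).syms from rfl)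
  replace this : GRA.A = GRA.R := this
  exact GRA.noConfusion this

lemma atomRCase (ts : Fin 2 → ℕ) (X : Finset ℕ) (v : ℕ → ZMod 3) (w : ℕ → ℤ)
    (hX : (GFml.atom (atR ts)).freeVars ⊆ X) (hG : Good v w X) :
    (GFml.atom (atR ts)).Realize M1 v ↔ (GFml.atom (atR ts)).Realize M2 w := by
  have h0 : ts 0 ∈ X := hX (mem_varsR0 ts)
  have h1 : ts 1 ∈ X := hX (mem_varsR1 ts)
  show v (ts 1) = v (ts 0) + 1 ↔ w (ts 1) = w (ts 0) + 1
  constructor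
  · intro h
    refine int_succ_of_cast ?_ (hG.2 _ h0 _ h1)
    rw [hG.1 _ h0, hG.1 _ h1, h]
  · intro h
    rw [← hG.1 _ h0, ← hG.1 _ h1, h]
    push_cast
    ring

lemma relCaseFwd (ys : List ℕ) (φ : GFml SigGRA)
    (IH : ∀ (X : Finset ℕ) (v : ℕ → ZMod 3) (w : ℕ → ℤ), φ.freeVars ⊆ X → Good v w X →
      (φ.Realize M1 v ↔ φ.Realize M2 w))
    (X : Finset ℕ) (v : ℕ → ZMod 3) (w : ℕ → ℤ) (ts : Fin 2 → ℕ)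
    (hfv : φ.freeVars ⊆ (atR ts).vars)
    (hXmem : ∀ x ∈ (atR ts).vars, x ∉ ys → x ∈ X) (hG : Good v w X)
    (v' : ℕ → ZMod 3) (hv'eq : ∀ x ∉ ys, v' x = v x)
    (hga : Atom.Realize M1 v' (atR ts)) (hgφ : φ.Realize M1 v') :
    ∃ w' : ℕ → ℤ, (∀ x ∉ ys, w' x = w x) ∧
      Atom.Realize M2 w' (atR ts) ∧ φ.Realize M2 w' := by
  have hga' : v' (ts 1) = v' (ts 0) + 1 := hga
  have hne : ts 0 ≠ ts 1 := by
    intro h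
    rw [h] at hga'
    exact absurd (left_eq_add.mp hga') (by decide)
  obtain ⟨w', hw'eq, hw0, hw1⟩ :
      ∃ w' : ℕ → ℤ, (∀ x ∉ ys, w' x = w x) ∧ ((w' (ts 0) : ZMod 3) = v' (ts 0)) ∧
        w' (ts 1) = w' (ts 0) + 1 := by
    by_cases h0 : ts 0 ∈ ys
    · by_cases h1 : ts 1 ∈ ys
      · refine ⟨fun x => if x = ts 1 then ((v' (ts 0)).val : ℤ) + 1
          else if x ∈ ys then ((v' (ts 0)).val : ℤ) else w x, ?_, ?_, ?_⟩
        · intro x hx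
          simp only [if_neg (fun h : x = ts 1 => hx (h ▸ h1)), if_neg hx]
        · simp only [if_neg hne, if_pos h0]
          exact lift_cast _
        · simp only [if_pos rfl, if_neg hne, if_pos h0, if_true]
      · have h1X : ts 1 ∈ X := hXmem _ (mem_varsR1 ts) h1
        refine ⟨fun x => if x ∈ ys then w (ts 1) - 1 else w x,
          fun x hx => by simp only [if_neg hx], ?_, ?_⟩
        · simp only [if_pos h0]
          push_cast
          rw [hG.1 _ h1X, ← hv'eq _ h1, hga']
          ring
        · simp only [if_neg h1, if_pos h0]
          ring
    · have h0X : ts 0 ∈ X := hXmem _ (mem_varsR0 ts) h0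
      have e0 : (w (ts 0) : ZMod 3) = v' (ts 0) := by rw [hG.1 _ h0X, hv'eq _ h0]
      by_cases h1 : ts 1 ∈ ys
      · refine ⟨fun x => if x ∈ ys then w (ts 0) + 1 else w x,
          fun x hx => by simp only [if_neg hx], ?_, ?_⟩
        · simp only [if_neg h0]
          exact e0
        · simp only [if_pos h1, if_neg h0]
      · have h1X : ts 1 ∈ X := hXmem _ (mem_varsR1 ts) h1
        refine ⟨w, fun _ _ => rfl, e0, ?_⟩
        apply int_succ_of_cast _ (hG.2 _ h0X _ h1X)
        rw [hG.1 _ h1X, ← hv'eq _ h1, hga', hv'eq _ h0, ← hG.1 _ h0X]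
  have hw1c : (w' (ts 1) : ZMod 3) = v' (ts 1) := by
    rw [hw1, hga']
    push_cast
    rw [hw0]
  refine ⟨w', hw'eq, hw1, ?_⟩
  refine (IH (atR ts).vars v' w' hfv ⟨?_, ?_⟩).mp hgφ
  · intro x hx
    rcases mem_varsR ts x hx with rfl | rfl
    · exact hw0
    · exact hw1c
  · intro x hx y hy
    rcases mem_varsR ts x hx with e | e <;> rcases mem_varsR ts y hy with e' | e' <;>
      rw [e, e'] <;> simp [hw1] <;> omega

lemma eqCaseFwd (ys : List ℕ) (φ : GFml SigGRA)
    (IH : ∀ (X : Finset ℕ) (v : ℕ → ZMod 3) (w : ℕ → ℤ), φ.freeVars ⊆ X → Good v w X →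
      (φ.Realize M1 v ↔ φ.Realize M2 w))
    (X : Finset ℕ) (v : ℕ → ZMod 3) (w : ℕ → ℤ) (i j : ℕ)
    (hfv : φ.freeVars ⊆ (atE i j).vars)
    (hXmem : ∀ x ∈ (atE i j).vars, x ∉ ys → x ∈ X) (hG : Good v w X)
    (v' : ℕ → ZMod 3) (hv'eq : ∀ x ∉ ys, v' x = v x)
    (hga : Atom.Realize M1 v' (atE i j)) (hgφ : φ.Realize M1 v') :
    ∃ w' : ℕ → ℤ, (∀ x ∉ ys, w' x = w x) ∧
      Atom.Realize M2 w' (atE i j) ∧ φ.Realize M2 w' := by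
  have hga' : v' i = v' j := hga
  have hiv : i ∈ (atE i j).vars := by simp [atE, Atom.vars]
  have hjv : j ∈ (atE i j).vars := by simp [atE, Atom.vars]
  obtain ⟨w', hw'eq, hwi, hweq⟩ :
      ∃ w' : ℕ → ℤ, (∀ x ∉ ys, w' x = w x) ∧ ((w' i : ZMod 3) = v' i) ∧ w' i = w' j := by
    by_cases hi : i ∈ ys
    · by_cases hj : j ∈ ys
      · refine ⟨fun x => if x ∈ ys then ((v' i).val : ℤ) else w x,
          fun x hx => by simp only [if_neg hx], ?_, by simp only [if_pos hi, if_pos hj]⟩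
        simp only [if_pos hi]
        exact lift_cast _
      · have hjX : j ∈ X := hXmem j hjv hj
        refine ⟨fun x => if x ∈ ys then w j else w x,
          fun x hx => by simp only [if_neg hx], ?_, by simp only [if_pos hi, if_neg hj]⟩
        simp only [if_pos hi]
        rw [hG.1 j hjX, ← hv'eq j hj, hga']
    · have hiX : i ∈ X := hXmem i hiv hi
      have ei : (w i : ZMod 3) = v' i := by rw [hG.1 i hiX, hv'eq i hi]
      by_cases hj : j ∈ ys
      · refine ⟨fun x => if x ∈ ys then w i else w x,
          fun x hx => by simp only [if_neg hx], ?_, by simp only [if_pos hj, if_neg hi]⟩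
        simp only [if_neg hi]
        exact ei
      · have hjX : j ∈ X := hXmem j hjv hj
        refine ⟨w, fun _ _ => rfl, ei, ?_⟩
        apply int_eq_of_cast _ (hG.2 i hiX j hjX)
        rw [hG.1 i hiX, hG.1 j hjX, ← hv'eq i hi, ← hv'eq j hj, hga']
  have hwj : (w' j : ZMod 3) = v' j := by rw [← hweq, hwi, hga']
  refine ⟨w', hw'eq, hweq, ?_⟩
  refine (IH (atE i j).vars v' w' hfv ⟨?_, ?_⟩).mp hgφ
  · intro x hx
    simp only [atE, Atom.vars, Finset.mem_insert, Finset.mem_singleton] at hx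
    rcases hx with rfl | rfl
    · exact hwi
    · exact hwj
  · intro x hx y hy
    simp only [atE, Atom.vars, Finset.mem_insert, Finset.mem_singleton] at hx hy
    rcases hx with rfl | rfl <;> rcases hy with rfl | rfl <;> simp [hweq]

lemma relCaseBwd (ys : List ℕ) (φ : GFml SigGRA)
    (IH : ∀ (X : Finset ℕ) (v : ℕ → ZMod 3) (w : ℕ → ℤ), φ.freeVars ⊆ X → Good v w X →
      (φ.Realize M1 v ↔ φ.Realize M2 w))
    (X : Finset ℕ) (v : ℕ → ZMod 3) (w : ℕ → ℤ) (ts : Fin 2 → ℕ)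
    (hfv : φ.freeVars ⊆ (atR ts).vars)
    (hXmem : ∀ x ∈ (atR ts).vars, x ∉ ys → x ∈ X) (hG : Good v w X)
    (w' : ℕ → ℤ) (hw'eq : ∀ x ∉ ys, w' x = w x)
    (hga : Atom.Realize M2 w' (atR ts)) (hgφ : φ.Realize M2 w') :
    ∃ v' : ℕ → ZMod 3, (∀ x ∉ ys, v' x = v x) ∧
      Atom.Realize M1 v' (atR ts) ∧ φ.Realize M1 v' := by
  have hga' : w' (ts 1) = w' (ts 0) + 1 := hga
  have hproj : ∀ x ∈ (atR ts).vars,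
      (if x ∈ ys then ((w' x : ZMod 3)) else v x) = (w' x : ZMod 3) := by
    intro x hx
    by_cases hxy : x ∈ ys
    · simp only [if_pos hxy]
    · simp only [if_neg hxy]
      rw [hw'eq x hxy]
      exact (hG.1 x (hXmem x hx hxy)).symm
  refine ⟨fun x => if x ∈ ys then ((w' x : ZMod 3)) else v x,
    fun x hx => by simp only [if_neg hx], ?_, ?_⟩
  · show (fun x => if x ∈ ys then ((w' x : ZMod 3)) else v x) (ts 1)
        = (fun x => if x ∈ ys then ((w' x : ZMod 3)) else v x) (ts 0) + 1
    simp only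
    rw [hproj _ (mem_varsR1 ts), hproj _ (mem_varsR0 ts), hga']
    push_cast
    ring
  · refine (IH (atR ts).vars _ w' hfv ⟨fun x hx => (hproj x hx).symm, ?_⟩).mpr hgφ
    intro x hx y hy
    rcases mem_varsR ts x hx with e | e <;> rcases mem_varsR ts y hy with e' | e' <;>
      rw [e, e'] <;> simp [hga'] <;> omega

lemma eqCaseBwd (ys : List ℕ) (φ : GFml SigGRA)
    (IH : ∀ (X : Finset ℕ) (v : ℕ → ZMod 3) (w : ℕ → ℤ), φ.freeVars ⊆ X → Good v w X →
      (φ.Realize M1 v ↔ φ.Realize M2 w))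
    (X : Finset ℕ) (v : ℕ → ZMod 3) (w : ℕ → ℤ) (i j : ℕ)
    (hfv : φ.freeVars ⊆ (atE i j).vars)
    (hXmem : ∀ x ∈ (atE i j).vars, x ∉ ys → x ∈ X) (hG : Good v w X)
    (w' : ℕ → ℤ) (hw'eq : ∀ x ∉ ys, w' x = w x)
    (hga : Atom.Realize M2 w' (atE i j)) (hgφ : φ.Realize M2 w') :
    ∃ v' : ℕ → ZMod 3, (∀ x ∉ ys, v' x = v x) ∧
      Atom.Realize M1 v' (atE i j) ∧ φ.Realize M1 v' := by
  have hga' : w' i = w' j := hga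
  have hiv : i ∈ (atE i j).vars := by simp [atE, Atom.vars]
  have hjv : j ∈ (atE i j).vars := by simp [atE, Atom.vars]
  have hproj : ∀ x ∈ (atE i j).vars,
      (if x ∈ ys then ((w' x : ZMod 3)) else v x) = (w' x : ZMod 3) := by
    intro x hx
    by_cases hxy : x ∈ ys
    · simp only [if_pos hxy]
    · simp only [if_neg hxy]
      rw [hw'eq x hxy]
      exact (hG.1 x (hXmem x hx hxy)).symm
  refine ⟨fun x => if x ∈ ys then ((w' x : ZMod 3)) else v x,
    fun x hx => by simp only [if_neg hx], ?_, ?_⟩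
  · show (fun x => if x ∈ ys then ((w' x : ZMod 3)) else v x) i
        = (fun x => if x ∈ ys then ((w' x : ZMod 3)) else v x) j
    simp only
    rw [hproj i hiv, hproj j hjv, hga']
  · refine (IH (atE i j).vars _ w' hfv ⟨fun x hx => (hproj x hx).symm, ?_⟩).mpr hgφ
    intro x hx y hy
    simp only [atE, Atom.vars, Finset.mem_insert, Finset.mem_singleton] at hx hy
    rcases hx with rfl | rfl <;> rcases hy with rfl | rfl <;> simp [hga']

lemma key : ∀ χ : GFml SigGRA, χ.WF → χ.syms ⊆ {GRA.R} →
    ∀ (X : Finset ℕ) (v : ℕ → ZMod 3) (w : ℕ → ℤ), χ.freeVars ⊆ X → Good v w X →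
      (χ.Realize M1 v ↔ χ.Realize M2 w) := by
  intro χ
  induction χ with
  | atom a =>
    intro _ hs X v w hX hG
    cases a with
    | eq i j =>
      have hi : i ∈ X := hX (by simp [GFml.freeVars, Atom.vars])
      have hj : j ∈ X := hX (by simp [GFml.freeVars, Atom.vars])
      simp only [GFml.Realize, Atom.Realize]
      constructor
      · intro h
        exact int_eq_of_cast (by rw [hG.1 i hi, hG.1 j hj, h]) (hG.2 i hi j hj)
      · intro h
        rw [← hG.1 i hi, ← hG.1 j hj, h]
    | rel r ts =>
      cases r with
      | G => exact (notG ts hs).elim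
      | A => exact (notA ts hs).elim
      | R => exact atomRCase ts X v w hX hG
  | neg φ ih =>
    intro hwf hs X v w hX hG
    simp only [GFml.Realize]
    rw [ih hwf hs X v w hX hG]
  | and φ ψ ih1 ih2 =>
    intro hwf hs X v w hX hG
    simp only [GFml.Realize]
    rw [ih1 hwf.1 (fun r hr => hs (Set.mem_union_left _ hr)) X v w
        (fun x hx => hX (Finset.mem_union_left _ hx)) hG,
      ih2 hwf.2 (fun r hr => hs (Set.mem_union_right _ hr)) X v w
        (fun x hx => hX (Finset.mem_union_right _ hx)) hG]
  | exg ys a φ ih =>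
    intro hwf hs X v w hX hG
    obtain ⟨hwfφ, hfv, hys⟩ := hwf
    have hsφ : φ.syms ⊆ {GRA.R} := fun r hr => hs (Set.mem_union_right _ hr)
    have hsa : a.syms ⊆ {GRA.R} := fun r hr => hs (Set.mem_union_left _ hr)
    have hXmem : ∀ x ∈ a.vars, x ∉ ys → x ∈ X := by
      intro x hx hxy
      exact hX (by
        simp only [GFml.freeVars, Finset.mem_sdiff, Finset.mem_union, List.mem_toFinset]
        exact ⟨Or.inl hx, hxy⟩)
    simp only [GFml.Realize]
    constructor
    · rintro ⟨v', hv'eq, hga, hgφ⟩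
      cases a with
      | eq i j =>
        exact eqCaseFwd ys φ (ih hwfφ hsφ) X v w i j hfv hXmem hG v' hv'eq hga hgφ
      | rel r ts =>
        cases r with
        | G => exact (notG ts hsa).elim
        | A => exact (notA ts hsa).elim
        | R => exact relCaseFwd ys φ (ih hwfφ hsφ) X v w ts hfv hXmem hG v' hv'eq hga hgφ
    · rintro ⟨w', hw'eq, hga, hgφ⟩
      cases a with
      | eq i j =>
        exact eqCaseBwd ys φ (ih hwfφ hsφ) X v w i j hfv hXmem hG w' hw'eq hga hgφ
      | rel r ts =>
        cases r with
        | G => exact (notG ts hsa).elim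
        | A => exact (notA ts hsa).elim
        | R => exact relCaseBwd ys φ (ih hwfφ hsφ) X v w ts hfv hXmem hG w' hw'eq hga hgφ

end GFP

namespace GFP

lemma M1phi (v : ℕ → ZMod 3) : phiTriangle.Realize M1 v := by
  refine ⟨fun x => if x ≤ 2 then (x : ZMod 3) else v x, ?_, trivial, ?_, ?_, ?_⟩
  · intro x hx
    have hx' : ¬ x ≤ 2 := by
      simp only [List.mem_cons, List.not_mem_nil, or_false] at hx
      omega
    simp [hx']
  · exact show ((1:ℕ) : ZMod 3) = ((0:ℕ) : ZMod 3) + 1 by decide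
  · exact show ((2:ℕ) : ZMod 3) = ((1:ℕ) : ZMod 3) + 1 by decide
  · exact show ((0:ℕ) : ZMod 3) = ((2:ℕ) : ZMod 3) + 1 by decide

lemma M2psi (w : ℕ → ℤ) : psiTwoCol.Realize M2 w := by
  rintro ⟨w', -, hR, hni⟩
  have hR' : w' 1 = w' 0 + 1 := hR
  apply hni
  show ¬ (¬ (Even (w' 0) ∧ ¬ Even (w' 1)) ∧ ¬ (¬ Even (w' 0) ∧ Even (w' 1)))
  rw [hR']
  rcases Int.even_or_odd (w' 0) with h | h
  · have h2 : ¬ Even (w' 0 + 1) := by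
      rcases h with ⟨k, hk⟩
      rintro ⟨m, hm⟩
      omega
    tauto
  · have h2 : ¬ Even (w' 0) := by
      rcases h with ⟨k, hk⟩
      rintro ⟨m, hm⟩
      omega
    have h3 : Even (w' 0 + 1) := ⟨(w' 0 + 1) / 2, by rcases h with ⟨k, hk⟩; omega⟩
    tauto

end GFP

namespace GFP

lemma realizeR_iff {D : Type} (A : Str SigGRA D) (u : ℕ → D) (m0 m1 : ℕ) :
    Atom.Realize A u (Atom.rel GRA.R ![m0, m1]) ↔ A GRA.R ![u m0, u m1] := by
  show A GRA.R _ ↔ _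
  have h : (fun k : Fin (SigGRA.arity GRA.R) => u (![m0, m1] k)) = ![u m0, u m1] := by
    funext k
    match k with
    | ⟨0, _⟩ => rfl
    | ⟨1, _⟩ => rfl
  rw [h]

lemma realizeA_iff {D : Type} (A : Str SigGRA D) (u : ℕ → D) (m : ℕ) :
    Atom.Realize A u (Atom.rel GRA.A ![m]) ↔ A GRA.A ![u m] := by
  show A GRA.A _ ↔ _
  have h : (fun k : Fin (SigGRA.arity GRA.A) => u (![m] k)) = ![u m] := by
    funext k
    match k with
    | ⟨0, _⟩ => rfl
  rw [h]

lemma iff_realize {D : Type} (A : Str SigGRA D) (u : ℕ → D) :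
    iffAxAy.Realize A u ↔ ((A GRA.A ![u 0]) ↔ ¬ A GRA.A ![u 1]) := by
  have hX : Atom.Realize A u atAx ↔ A GRA.A ![u 0] := realizeA_iff A u 0
  have hY : Atom.Realize A u atAy ↔ A GRA.A ![u 1] := realizeA_iff A u 1
  show (¬ (¬ (Atom.Realize A u atAx ∧ ¬ Atom.Realize A u atAy) ∧
      ¬ (¬ Atom.Realize A u atAx ∧ Atom.Realize A u atAy))) ↔ _
  rw [hX, hY]
  tauto

lemma psi_edge {D : Type} (A : Str SigGRA D) (v : ℕ → D)
    (hpsi : psiTwoCol.Realize A v) (c d : D) (hR : A GRA.R ![c, d]) :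
    (A GRA.A ![c]) ↔ ¬ A GRA.A ![d] := by
  by_contra hiff
  apply hpsi
  refine ⟨fun x => if x = 0 then c else if x = 1 then d else v x, ?_, ?_, ?_⟩
  · intro x hx
    simp only [List.mem_cons, List.not_mem_nil, or_false, not_or] at hx
    simp [hx.1, hx.2]
  · exact (realizeR_iff A _ 0 1).mpr hR
  · intro hiffr
    exact hiff ((iff_realize A _).mp hiffr)

lemma entails1 : Entails phiTriangle (GFml.neg psiTwoCol) := by
  rintro D _ A v ⟨u, -, -, hxy, hyz, hzx⟩
  intro hpsi
  have h1 := psi_edge A v hpsi (u 0) (u 1) ((realizeR_iff A u 0 1).mp hxy)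
  have h2 := psi_edge A v hpsi (u 1) (u 2) ((realizeR_iff A u 1 2).mp hyz)
  have h3 := psi_edge A v hpsi (u 2) (u 0) ((realizeR_iff A u 2 0).mp hzx)
  tauto

end GFP

open GFP in
/-- `φ ⊨ ¬ψ` (both are one-dimensional GF sentences), but there is
no one-dimensional GF sentence `χ` over the shared vocabulary `{R}` with `φ ⊨ χ` and
`χ ⊨ ¬ψ`. -/
theorem no_oneDim_interpolant_for_triangle :
    Entails phiTriangle (.neg psiTwoCol) ∧
    IsGF Set.univ phiTriangle ∧ phiTriangle.OneDim ∧ phiTriangle.Sentence ∧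
    IsGF Set.univ (GFml.neg psiTwoCol) ∧ (GFml.neg psiTwoCol).OneDim ∧
      (GFml.neg psiTwoCol).Sentence ∧
    ¬ ∃ χ : GFml SigGRA, IsGF ({GRA.R} : Set GRA) χ ∧ χ.OneDim ∧ χ.Sentence ∧
        Entails phiTriangle χ ∧ Entails χ (.neg psiTwoCol) := by
  refine ⟨entails1,
    ⟨by simp [GFml.WF, phiTriangle]; decide, Set.subset_univ _⟩,
    by simp [GFml.OneDim, phiTriangle]; decide,
    by unfold GFml.Sentence; decide,
    ⟨by simp [GFml.WF, psiTwoCol, iffAxAy]; decide, Set.subset_univ _⟩,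
    by simp [GFml.OneDim, psiTwoCol, iffAxAy]; decide,
    by unfold GFml.Sentence; decide, ?_⟩
  rintro ⟨χ, ⟨hwf, hsy⟩, -, hsen, h1, h2⟩
  have hχ1 : χ.Realize M1 (fun _ => 0) := h1 (ZMod 3) ⟨0⟩ M1 _ (M1phi _)
  have hχ2 : χ.Realize M2 (fun _ => 0) :=
    (key χ hwf hsy ∅ (fun _ => 0) (fun _ => 0) (by rw [hsen])
      ⟨fun x hx => absurd hx (Finset.notMem_empty x),
       fun x hx => absurd hx (Finset.notMem_empty x)⟩).mp hχ1
  exact h2 ℤ ⟨0⟩ M2 _ hχ2 (M2psi _)
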